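/- (Optimality at termination in Theorem 2.) Let Q be a symmetric, conditionally negative definite n×n real matrix, f(x) = ½⟨Qx, x⟩, h(x, y) = ⟨Qy, x − y⟩ + f(y), and K = {x ∈ {0,1}^n : Σ_{i=1}^n x_i = p} with 1 ≤ p ≤ n. Let A ⊆ K be nonempty and set LB = max_{y ∈ A} f(y). If there is no pair (x, θ) with x ∈ K, θ ∈ ℝ, θ ≤ h(x, y) for all y ∈ A, and θ > LB, then LB = max_{x ∈ K} f(x); i.e., any point of A attaining LB is an optimal solution of the problem max_{x∈K} f(x). -/

import Mathlib

open Matrix BigOperators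

/-- Optimality at termination in Theorem 2: With `Q` symmetric
conditionally negative definite, `K = {x ∈ {0,1}ⁿ : ∑ x i = p}` (`1 ≤ p ≤ n`),
`f x = ½⟨Qx, x⟩`, `h x y = ⟨Qy, x - y⟩ + f y`, `A ⊆ K` nonempty and
`LB = max_{y ∈ A} f y`: if there is no candidate `(x, θ)` with `x ∈ K`,
`θ ≤ h x y` for all `y ∈ A`, and `θ > LB`, then `LB = max_{x ∈ K} f x`. -/
theorem cutting_plane_termination_optimality
    (n p : ℕ) (hp : 1 ≤ p) (hpn : p ≤ n)
    (Q : Matrix (Fin n) (Fin n) ℝ) (hQ : Q.IsSymm)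
    (hcnd : ∀ z : Fin n → ℝ, ∑ i, z i = 0 → Q *ᵥ z ⬝ᵥ z ≤ 0)
    (K : Set (Fin n → ℝ))
    (hK : K = {x | (∀ i, x i = 0 ∨ x i = 1) ∧ ∑ i, x i = (p : ℝ)})
    (f : (Fin n → ℝ) → ℝ) (hf : ∀ x, f x = (1 / 2) * (Q *ᵥ x ⬝ᵥ x))
    (h : (Fin n → ℝ) → (Fin n → ℝ) → ℝ)
    (hh : ∀ x y, h x y = Q *ᵥ y ⬝ᵥ (x - y) + f y)
    (A : Set (Fin n → ℝ)) (hA : A.Nonempty) (hAK : A ⊆ K)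
    (LB : ℝ) (hLB : IsGreatest (f '' A) LB)
    (hterm : ¬ ∃ (x : Fin n → ℝ) (θ : ℝ), x ∈ K ∧ (∀ y ∈ A, θ ≤ h x y) ∧ LB < θ) :
    IsGreatest (f '' K) LB := by
  have hsym : ∀ u v : Fin n → ℝ, Q *ᵥ u ⬝ᵥ v = Q *ᵥ v ⬝ᵥ u := by
    intro u v
    rw [dotProduct_comm, dotProduct_mulVec, ← mulVec_transpose, hQ.eq]
  constructor
  · exact Set.image_mono (f := f) hAK hLB.1
  · rintro v ⟨x, hxK, rfl⟩
    by_contra hlt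
    push_neg at hlt
    refine hterm ⟨x, f x, hxK, fun y hyA => ?_, hlt⟩
    have hzsum : ∑ i, (x - y) i = 0 := by
      have hx : ∑ i, x i = (p : ℝ) := (hK ▸ hxK).2
      have hy : ∑ i, y i = (p : ℝ) := (hK ▸ (hAK hyA)).2
      simp [Pi.sub_apply, Finset.sum_sub_distrib, hx, hy]
    have hneg := hcnd (x - y) hzsum
    have hexp : Q *ᵥ (x - y) ⬝ᵥ (x - y)
        = Q *ᵥ x ⬝ᵥ x - 2 * (Q *ᵥ y ⬝ᵥ x) + Q *ᵥ y ⬝ᵥ y := by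
      rw [mulVec_sub, sub_dotProduct, dotProduct_sub, dotProduct_sub, hsym x y]
      ring
    rw [hh, hf, hf, dotProduct_sub]
    nlinarith [hneg, hexp]
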